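/- arXiv:2001.11467 — 2 statements merged into one kernel-verified Lean document; each statement's English description precedes it below -/
import Mathlib

section
/- Let S be a finite set of points in the plane with at least two elements, and define the separation distance s(S) as the maximum over all partitions S = I ∪ J into two nonempty parts of the distance d(I,J) = min_{x∈I, y∈J} |x−y|. Then (diam S)/|S| ≤ s(S) ≤ diam S, where diam S is the Euclidean diameter of S. -/
/-- The distance between two finite sets of points: the minimum pairwise distance. -/
noncomputable def pairDist (I J : Finset ℂ) : ℝ :=
  sInf {d : ℝ | ∃ x ∈ I, ∃ y ∈ J, d = dist x y}

/-- The separation distance of a finite set `S`: the largest `t` such that `S` can be split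
into two nonempty parts at mutual distance `t` (with the convention `0` when no such
partition exists, e.g. for singletons). -/
noncomputable def sepDist (S : Finset ℂ) : ℝ :=
  sSup {t : ℝ | ∃ I J : Finset ℂ, I ∪ J = S ∧ Disjoint I J ∧ I.Nonempty ∧ J.Nonempty ∧
    t = pairDist I J}

theorem stmt0 (S : Finset ℂ) (hS : 2 ≤ S.card) :
    Metric.diam (S : Set ℂ) / S.card ≤ sepDist S ∧
    sepDist S ≤ Metric.diam (S : Set ℂ) := by
  classical
  set D := Metric.diam (S : Set ℂ) with hD
  have hbdd : Bornology.IsBounded (S : Set ℂ) := S.finite_toSet.isBounded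
  set T : Set ℝ := {t : ℝ | ∃ I J : Finset ℂ, I ∪ J = S ∧ Disjoint I J ∧ I.Nonempty ∧
      J.Nonempty ∧ t = pairDist I J} with hT
  have hsep : sepDist S = sSup T := by rw [sepDist, hT]
  have hub : ∀ t ∈ T, t ≤ D := by
    rintro t ⟨I, J, hIJ, -, ⟨x, hx⟩, ⟨y, hy⟩, rfl⟩
    have hxS : x ∈ S := by rw [← hIJ]; exact Finset.mem_union_left _ hx
    have hyS : y ∈ S := by rw [← hIJ]; exact Finset.mem_union_right _ hy
    have h1 : pairDist I J ≤ dist x y := by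
      apply csInf_le
      · exact ⟨0, by rintro d ⟨x', -, y', -, rfl⟩; exact dist_nonneg⟩
      · exact ⟨x, hx, y, hy, rfl⟩
    exact h1.trans (Metric.dist_le_diam_of_mem hbdd hxS hyS)
  have hBdd : BddAbove T := ⟨D, hub⟩
  -- the diameter is attained at some pair (a, b)
  obtain ⟨p, hp, hmax⟩ := (S ×ˢ S).exists_max_image (fun q => dist q.1 q.2)
    (by
      have h1 : 0 < S.card := by omega
      obtain ⟨x, hx⟩ := Finset.card_pos.mp h1
      exact ⟨(x, x), Finset.mem_product.mpr ⟨hx, hx⟩⟩)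
  obtain ⟨ha, hb⟩ := Finset.mem_product.mp hp
  set a := p.1 with hadef
  set b := p.2 with hbdef
  have hDab : D = dist a b := by
    refine le_antisymm ?_ (Metric.dist_le_diam_of_mem hbdd ha hb)
    exact Metric.diam_le_of_forall_dist_le dist_nonneg fun x hx y hy =>
      hmax (x, y) (Finset.mem_product.mpr ⟨hx, hy⟩)
  have hDpos : 0 < D := by
    have h1 : 1 < S.card := by omega
    obtain ⟨x, hx, y, hy, hxy⟩ := Finset.one_lt_card.mp h1
    exact lt_of_lt_of_le (dist_pos.mpr hxy) (Metric.dist_le_diam_of_mem hbdd hx hy)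
  set n := S.card with hn
  have hnpos : (0 : ℝ) < n := by
    have : 0 < n := by omega
    exact_mod_cast this
  set t : ℝ := D / n with htdef
  have ht : 0 < t := div_pos hDpos hnpos
  have hnt : (n : ℝ) * t = D := mul_div_cancel₀ D hnpos.ne'
  -- pigeonhole: some annulus [k*t, (k+1)*t) around a contains no point of S
  set g : ℂ → ℕ := fun x => ⌊dist a x / t⌋₊ with hg
  set F : Finset ℂ := S.filter (fun x => dist a x < n * t) with hF
  set A : Finset ℕ := F.image g with hA
  have hA_sub : A ⊆ Finset.range n := by
    intro k hk
    obtain ⟨x, hxF, rfl⟩ := Finset.mem_image.mp hk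
    have hx : dist a x < n * t := (Finset.mem_filter.mp hxF).2
    exact Finset.mem_range.mpr ((Nat.floor_lt (by positivity)).mpr ((div_lt_iff₀ ht).mpr hx))
  have hnt' : (n : ℝ) * t = dist a b := by rw [hnt, hDab]
  have hbF : b ∉ F := by
    intro hbF
    have := (Finset.mem_filter.mp hbF).2
    linarith
  have hFsub : F ⊆ S.erase b := fun x hx =>
    Finset.mem_erase.mpr ⟨fun h => hbF (h ▸ hx), (Finset.mem_filter.mp hx).1⟩
  have hcard : A.card < n := by
    calc A.card ≤ F.card := Finset.card_image_le
      _ ≤ (S.erase b).card := Finset.card_le_card hFsub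
      _ = n - 1 := by rw [Finset.card_erase_of_mem hb]
      _ < n := by omega
  have hAne : A ≠ Finset.range n := by
    intro h
    rw [h, Finset.card_range] at hcard
    omega
  obtain ⟨k, hkrange, hkA⟩ := Finset.exists_of_ssubset (hA_sub.ssubset_of_ne hAne)
  have hkn : k < n := Finset.mem_range.mp hkrange
  have haF : a ∈ F := Finset.mem_filter.mpr ⟨ha, by
    rw [dist_self]; positivity⟩
  have hga : g a = 0 := by simp [hg, dist_self]
  have hk1 : 1 ≤ k := by
    rcases Nat.eq_zero_or_pos k with h | h
    · exact absurd (Finset.mem_image.mpr ⟨a, haF, h ▸ hga⟩) hkA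
    · exact h
  -- the annulus is empty
  have hgap : ∀ x ∈ S, ¬ ((k : ℝ) * t ≤ dist a x ∧ dist a x < ((k : ℝ) + 1) * t) := by
    rintro x hx ⟨h1, h2⟩
    have hk1n : ((k : ℝ) + 1) ≤ (n : ℝ) := by exact_mod_cast hkn
    have hxF : x ∈ F := Finset.mem_filter.mpr ⟨hx, lt_of_lt_of_le h2
      (mul_le_mul_of_nonneg_right hk1n ht.le)⟩
    have hgx : g x = k := by
      rw [hg]
      refine (Nat.floor_eq_iff (by positivity)).mpr ⟨(le_div_iff₀ ht).mpr h1, ?_⟩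
      exact (div_lt_iff₀ ht).mpr h2
    exact hkA (Finset.mem_image.mpr ⟨x, hxF, hgx⟩)
  -- define the partition
  set I : Finset ℂ := S.filter (fun x => dist a x < (k : ℝ) * t) with hI
  set J : Finset ℂ := S.filter (fun x => ¬ dist a x < (k : ℝ) * t) with hJ
  have hunion : I ∪ J = S := Finset.filter_union_filter_not_eq _ S
  have hdisj : Disjoint I J := Finset.disjoint_filter_filter_not S S _
  have haI : a ∈ I := Finset.mem_filter.mpr ⟨ha, by
    rw [dist_self]
    have : (1 : ℝ) ≤ (k : ℝ) := by exact_mod_cast hk1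
    nlinarith⟩
  have hbJ : b ∈ J := Finset.mem_filter.mpr ⟨hb, by
    have hkn' : (k : ℝ) ≤ (n : ℝ) := by exact_mod_cast hkn.le
    push_neg
    nlinarith⟩
  have hpd : t ≤ pairDist I J := by
    refine le_csInf ⟨dist a b, ⟨a, haI, b, hbJ, rfl⟩⟩ ?_
    rintro d ⟨x, hxI, y, hyJ, rfl⟩
    have hx1 : dist a x < (k : ℝ) * t := (Finset.mem_filter.mp hxI).2
    have hy1 : (k : ℝ) * t ≤ dist a y := not_lt.mp (Finset.mem_filter.mp hyJ).2
    have hy2 : ((k : ℝ) + 1) * t ≤ dist a y := by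
      by_contra h
      exact hgap y (Finset.mem_filter.mp hyJ).1 ⟨hy1, not_le.mp h⟩
    have htri : dist a y ≤ dist a x + dist x y := dist_triangle a x y
    nlinarith
  have hmem : pairDist I J ∈ T := ⟨I, J, hunion, hdisj, ⟨a, haI⟩, ⟨b, hbJ⟩, rfl⟩
  constructor
  · have : t ≤ sepDist S := by
      rw [hsep]
      exact hpd.trans (le_csSup hBdd hmem)
    exact this
  · rw [hsep]
    exact Real.sSup_le hub Metric.diam_nonneg
end

section
/- Fix γ ∈ (0,2) and an integer k with 1 ≤ k < 4/γ². Then the integral u_k := ∫_{𝔻^k} ∏_{1≤i<j≤k} |z_i − z_j|^{−γ²} dz_1 … dz_k over the k-fold product of the unit disk 𝔻 ⊂ ℂ is finite. -/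
open MeasureTheory Metric Set
open scoped ENNReal

lemma aux_J {β : ℝ} (hβ0 : 0 ≤ β) (hβ : β < 2) :
    ∫⁻ v in Metric.ball (0:ℂ) 1, ENNReal.ofReal (‖v‖ ^ (-β)) < ⊤ := by
  classical
  set r : ℝ := 2⁻¹ with hr
  have hr0 : (0:ℝ) < r := by norm_num [hr]
  have hr1 : r < 1 := by norm_num [hr]
  set f : ℂ → ℝ≥0∞ := fun v => ENNReal.ofReal (‖v‖ ^ (-β)) with hf
  set S : ℕ → Set ℂ := fun n => Metric.ball (0:ℂ) (r^n) \ Metric.ball 0 (r^(n+1)) with hS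
  have hcover : Metric.ball (0:ℂ) 1 ⊆ {0} ∪ ⋃ n, S n := by
    intro v hv
    rcases eq_or_ne v 0 with rfl | hv0
    · exact Or.inl rfl
    refine Or.inr ?_
    have hv0' : 0 < ‖v‖ := norm_pos_iff.2 hv0
    have hv1 : ‖v‖ < 1 := mem_ball_zero_iff.1 hv
    have hex : ∃ m : ℕ, r^m ≤ ‖v‖ := by
      obtain ⟨m, hm⟩ := exists_pow_lt_of_lt_one hv0' hr1
      exact ⟨m, hm.le⟩
    have hm : r ^ (Nat.find hex) ≤ ‖v‖ := Nat.find_spec hex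
    have hm0 : Nat.find hex ≠ 0 := by
      intro h
      rw [h, pow_zero] at hm
      linarith
    obtain ⟨n, hn⟩ : ∃ n, Nat.find hex = n + 1 :=
      ⟨Nat.find hex - 1, (Nat.succ_pred_eq_of_pos (Nat.pos_of_ne_zero hm0)).symm⟩
    refine Set.mem_iUnion.2 ⟨n, ?_, ?_⟩
    · exact mem_ball_zero_iff.2 (lt_of_not_ge (Nat.find_min hex (by omega)))
    · intro h
      exact absurd (mem_ball_zero_iff.1 h) (not_lt.2 (hn ▸ hm))
  have h3 : ∫⁻ v in ({(0:ℂ)} : Set ℂ), f v = 0 := by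
    rw [Measure.restrict_eq_zero.2 (measure_singleton 0), lintegral_zero_measure]
  set q : ℝ := r ^ (2 - β) with hq
  have hq0 : 0 < q := Real.rpow_pos_of_pos hr0 _
  have hq1 : q < 1 := Real.rpow_lt_one hr0.le hr1 (by linarith)
  have h4 : ∀ n, ∫⁻ v in S n, f v ≤
      ENNReal.ofReal (r ^ (-β)) * volume (Metric.ball (0:ℂ) 1) * (ENNReal.ofReal q)^n := by
    intro n
    have hb : ∀ v ∈ S n, f v ≤ ENNReal.ofReal ((r^(n+1) : ℝ) ^ (-β)) := by
      intro v hv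
      have h1 : r^(n+1) ≤ ‖v‖ := not_lt.1 (fun h => hv.2 (mem_ball_zero_iff.2 h))
      have h2 : (0:ℝ) < r^(n+1) := pow_pos hr0 _
      apply ENNReal.ofReal_le_ofReal
      rw [Real.rpow_neg h2.le, Real.rpow_neg (norm_nonneg v)]
      exact inv_anti₀ (Real.rpow_pos_of_pos h2 β) (Real.rpow_le_rpow h2.le h1 hβ0)
    calc ∫⁻ v in S n, f v ≤ ∫⁻ _ in S n, ENNReal.ofReal ((r^(n+1) : ℝ) ^ (-β)) := by
          refine setLIntegral_mono (by fun_prop) hb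
      _ = ENNReal.ofReal ((r^(n+1) : ℝ) ^ (-β)) * volume (S n) := setLIntegral_const _ _
      _ ≤ ENNReal.ofReal ((r^(n+1) : ℝ) ^ (-β)) *
            (ENNReal.ofReal ((r^n) ^ (Module.finrank ℝ ℂ)) * volume (Metric.ball (0:ℂ) 1)) := by
          refine mul_le_mul_right ?_ _
          rw [← Measure.addHaar_ball volume (0:ℂ) (pow_pos hr0 n).le]
          exact measure_mono Set.diff_subset
      _ = ENNReal.ofReal (r ^ (-β)) * volume (Metric.ball (0:ℂ) 1) * (ENNReal.ofReal q)^n := by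
          rw [Complex.finrank_real_complex]
          have key : ((r^(n+1):ℝ)) ^ (-β) * ((r^n:ℝ))^2 = r ^ (-β) * q^n := by
            rw [hq, ← Real.rpow_natCast (r ^ (2 - β)) n, ← Real.rpow_natCast r (n+1),
              ← Real.rpow_natCast (r^n) 2, ← Real.rpow_natCast r n,
              ← Real.rpow_mul hr0.le, ← Real.rpow_mul hr0.le, ← Real.rpow_mul hr0.le,
              ← Real.rpow_add hr0, ← Real.rpow_add hr0]
            congr 1
            push_cast
            ring
          rw [← mul_assoc, ← ENNReal.ofReal_mul (by positivity), key,
            ENNReal.ofReal_mul (by positivity), ENNReal.ofReal_pow hq0.le]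
          ring
  have hV : volume (Metric.ball (0:ℂ) 1) < ⊤ := measure_ball_lt_top
  calc ∫⁻ v in Metric.ball (0:ℂ) 1, f v
      ≤ ∫⁻ v in ({0} ∪ ⋃ n, S n), f v := lintegral_mono_set hcover
    _ ≤ (∫⁻ v in {(0:ℂ)}, f v) + ∫⁻ v in ⋃ n, S n, f v := lintegral_union_le _ _ _
    _ = ∫⁻ v in ⋃ n, S n, f v := by rw [h3, zero_add]
    _ ≤ ∑' n, ∫⁻ v in S n, f v := lintegral_iUnion_le _ _
    _ ≤ ∑' n, ENNReal.ofReal (r ^ (-β)) * volume (Metric.ball (0:ℂ) 1) * (ENNReal.ofReal q)^n :=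
        ENNReal.tsum_le_tsum h4
    _ = ENNReal.ofReal (r ^ (-β)) * volume (Metric.ball (0:ℂ) 1) * ∑' n, (ENNReal.ofReal q)^n := by
        rw [ENNReal.tsum_mul_left]
    _ < ⊤ := by
        rw [ENNReal.tsum_geometric]
        refine ENNReal.mul_lt_top (ENNReal.mul_lt_top ENNReal.ofReal_lt_top hV) ?_
        rw [ENNReal.inv_lt_top]
        exact tsub_pos_of_lt (by simpa using ENNReal.ofReal_lt_one.2 hq1)

lemma aux_bound {β : ℝ} (hβ0 : 0 ≤ β) (hβ : β < 2) :
    ∃ C : ℝ≥0∞, C < ⊤ ∧ ∀ w : ℂ,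
      (∫⁻ u in Metric.ball (0:ℂ) 1, ENNReal.ofReal (dist w u ^ (-β))) ≤ C := by
  refine ⟨(∫⁻ v in Metric.ball (0:ℂ) 1, ENNReal.ofReal (‖v‖ ^ (-β)))
      + volume (Metric.ball (0:ℂ) 1),
    ENNReal.add_lt_top.2 ⟨aux_J hβ0 hβ, measure_ball_lt_top⟩, fun w => ?_⟩
  have htrans : (∫⁻ u in Metric.ball w 1, ENNReal.ofReal (dist w u ^ (-β)))
      = ∫⁻ v in Metric.ball (0:ℂ) 1, ENNReal.ofReal (‖v‖ ^ (-β)) := by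
    have hmp : MeasurePreserving (fun v : ℂ => w + v) volume volume :=
      measurePreserving_add_left volume w
    have hemb : MeasurableEmbedding (fun v : ℂ => w + v) := by
      have : (fun v : ℂ => w + v) = fun v : ℂ => v + w := by ext v; ring
      rw [this]
      exact (MeasurableEquiv.addRight w).measurableEmbedding
    have h := hmp.setLIntegral_comp_preimage_emb hemb
      (fun u => ENNReal.ofReal (dist w u ^ (-β))) (Metric.ball w 1)
    have hpre : (fun v : ℂ => w + v) ⁻¹' (Metric.ball w 1) = Metric.ball (0:ℂ) 1 := by
      ext v
      simp [Metric.mem_ball, dist_self_add_right, dist_comm]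
    rw [hpre] at h
    rw [← h]
    congr 1
    ext v
    rw [dist_self_add_right]
  have hpt : ∀ u : ℂ, ENNReal.ofReal (dist w u ^ (-β)) ≤
      (Metric.ball w 1).indicator (fun u => ENNReal.ofReal (dist w u ^ (-β))) u + 1 := by
    intro u
    by_cases hu : u ∈ Metric.ball w 1
    · rw [Set.indicator_of_mem hu]
      exact le_self_add
    · rw [Set.indicator_of_notMem hu, zero_add]
      have h1 : (1:ℝ) ≤ dist w u := by
        rw [Metric.mem_ball, dist_comm] at hu
        linarith [not_lt.1 hu]
      calc ENNReal.ofReal (dist w u ^ (-β)) ≤ ENNReal.ofReal 1 :=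
            ENNReal.ofReal_le_ofReal
              (Real.rpow_le_one_of_one_le_of_nonpos h1 (neg_nonpos.2 hβ0))
        _ = 1 := ENNReal.ofReal_one
  calc (∫⁻ u in Metric.ball (0:ℂ) 1, ENNReal.ofReal (dist w u ^ (-β)))
      ≤ ∫⁻ u in Metric.ball (0:ℂ) 1,
          ((Metric.ball w 1).indicator (fun u => ENNReal.ofReal (dist w u ^ (-β))) u + 1) :=
        lintegral_mono hpt
    _ = (∫⁻ u in Metric.ball (0:ℂ) 1,
          (Metric.ball w 1).indicator (fun u => ENNReal.ofReal (dist w u ^ (-β))) u)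
          + volume (Metric.ball (0:ℂ) 1) := by
        rw [lintegral_add_right _ measurable_const, lintegral_one,
          Measure.restrict_apply_univ]
    _ ≤ (∫⁻ u, (Metric.ball w 1).indicator (fun u => ENNReal.ofReal (dist w u ^ (-β))) u)
          + volume (Metric.ball (0:ℂ) 1) :=
        add_le_add_left (setLIntegral_le_lintegral _ _) _
    _ = (∫⁻ u in Metric.ball w 1, ENNReal.ofReal (dist w u ^ (-β)))
          + volume (Metric.ball (0:ℂ) 1) := by
        rw [lintegral_indicator measurableSet_ball]
    _ = _ := by rw [htrans]

lemma aux_fubini {α : Type*} [MeasurableSpace α] : ∀ {n : ℕ} (ν : Measure α) [SigmaFinite ν]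
    (f : Fin n → α → ℝ≥0∞) (_ : ∀ i, Measurable (f i)),
    ∫⁻ x, ∏ i, f i (x i) ∂(Measure.pi fun _ : Fin n => ν) = ∏ i, ∫⁻ w, f i w ∂ν := by
  intro n
  induction n with
  | zero =>
    intro ν _ f hf
    simp [lintegral_const, Measure.pi_univ]
  | succ n ih =>
    intro ν _ f hf
    have hmp := (measurePreserving_piFinSuccAbove (fun _ : Fin (n+1) => ν) 0).symm
    rw [← hmp.lintegral_comp_emb (MeasurableEquiv.measurableEmbedding _)]
    have : ∀ p : α × (Fin n → α),
        (∏ i, f i ((MeasurableEquiv.piFinSuccAbove (fun _ : Fin (n+1) => α) 0).symm p i))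
        = f 0 p.1 * ∏ i : Fin n, f i.succ (p.2 i) := by
      intro p
      rw [Fin.prod_univ_succ]
      simp [MeasurableEquiv.piFinSuccAbove_symm_apply, Fin.insertNth_zero]
    simp_rw [this]
    have hg : Measurable (fun y : Fin n → α => ∏ i, f i.succ (y i)) :=
      Finset.measurable_prod _ fun i _ => (hf i.succ).comp (measurable_pi_apply i)
    calc ∫⁻ a : α × (Fin n → α), f 0 a.1 * ∏ i : Fin n, f i.succ (a.2 i)
          ∂(ν.prod (Measure.pi fun _ : Fin n => ν))
        = (∫⁻ w, f 0 w ∂ν) * ∫⁻ y : Fin n → α, ∏ i : Fin n, f i.succ (y i)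
            ∂(Measure.pi fun _ : Fin n => ν) :=
          lintegral_prod_mul (hf 0).aemeasurable hg.aemeasurable
      _ = ∏ i, ∫⁻ w, f i w ∂ν := by
          rw [ih ν (fun i => f i.succ) (fun i => hf i.succ), Fin.prod_univ_succ]

lemma aux_restrict (k : ℕ) :
    (volume : Measure (Fin k → ℂ)).restrict {z | ∀ i, z i ∈ Metric.ball (0:ℂ) 1}
      = Measure.pi (fun _ : Fin k => volume.restrict (Metric.ball (0:ℂ) 1)) := by
  have hSet : {z : Fin k → ℂ | ∀ i, z i ∈ Metric.ball (0:ℂ) 1}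
      = Set.pi Set.univ (fun _ => Metric.ball (0:ℂ) 1) := by
    ext z; simp [Set.mem_pi]
  rw [hSet]
  refine (Measure.pi_eq fun s hs => ?_).symm
  rw [Measure.restrict_apply (MeasurableSet.univ_pi hs), ← Set.pi_inter_distrib,
    volume_pi, Measure.pi_pi]
  exact Finset.prod_congr rfl fun i _ => (Measure.restrict_apply (hs i)).symm

instance : IsFiniteMeasure ((volume : Measure ℂ).restrict (Metric.ball (0:ℂ) 1)) :=
  ⟨by rw [Measure.restrict_apply_univ]; exact measure_ball_lt_top⟩

lemma aux_perI {n : ℕ} {β : ℝ} (hβ0 : 0 ≤ β) (hβ2 : β < 2) (i : Fin (n+1)) :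
    ∫⁻ z : Fin (n+1) → ℂ,
        ∏ j ∈ Finset.univ.erase i, ENNReal.ofReal (dist (z i) (z j) ^ (-β))
      ∂(Measure.pi fun _ => (volume : Measure ℂ).restrict (Metric.ball (0:ℂ) 1)) < ⊤ := by
  obtain ⟨C, hC, hCb⟩ := aux_bound hβ0 hβ2
  set ν := (volume : Measure ℂ).restrict (Metric.ball (0:ℂ) 1) with hν
  have reindex : ∀ (F : Fin (n+1) → ℝ≥0∞),
      ∏ j ∈ Finset.univ.erase i, F j = ∏ l : Fin n, F (i.succAbove l) := by
    intro F
    symm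
    refine Finset.prod_nbij i.succAbove
      (fun l _ => Finset.mem_erase.2 ⟨Fin.succAbove_ne i l, Finset.mem_univ _⟩)
      (fun a _ b _ h => Fin.succAbove_right_injective h) (fun j hj => ?_) (fun l _ => rfl)
    obtain ⟨l, hl⟩ := Fin.exists_succAbove_eq (Finset.mem_erase.1 (Finset.mem_coe.1 hj)).1
    exact ⟨l, by simp, hl⟩
  have hmp := (measurePreserving_piFinSuccAbove (fun _ : Fin (n+1) => ν) i).symm
  rw [← hmp.lintegral_comp_emb (MeasurableEquiv.measurableEmbedding _)]
  have key : ∀ p : ℂ × (Fin n → ℂ),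
      (∏ j ∈ Finset.univ.erase i, ENNReal.ofReal
        (dist (((MeasurableEquiv.piFinSuccAbove (fun _ : Fin (n+1) => ℂ) i).symm p) i)
              (((MeasurableEquiv.piFinSuccAbove (fun _ : Fin (n+1) => ℂ) i).symm p) j) ^ (-β)))
      = ∏ l : Fin n, ENNReal.ofReal (dist p.1 (p.2 l) ^ (-β)) := by
    intro p
    rw [reindex]
    refine Finset.prod_congr rfl fun l _ => ?_
    simp [MeasurableEquiv.piFinSuccAbove_symm_apply]
  calc ∫⁻ p : ℂ × (Fin n → ℂ),
        ∏ j ∈ Finset.univ.erase i, ENNReal.ofReal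
          (dist (((MeasurableEquiv.piFinSuccAbove (fun _ : Fin (n+1) => ℂ) i).symm p) i)
                (((MeasurableEquiv.piFinSuccAbove (fun _ : Fin (n+1) => ℂ) i).symm p) j) ^ (-β))
        ∂(ν.prod (Measure.pi fun _ : Fin n => ν))
      = ∫⁻ p : ℂ × (Fin n → ℂ), ∏ l : Fin n, ENNReal.ofReal (dist p.1 (p.2 l) ^ (-β))
          ∂(ν.prod (Measure.pi fun _ : Fin n => ν)) := by
        exact lintegral_congr key
    _ = ∫⁻ w, (∫⁻ y : Fin n → ℂ, ∏ l : Fin n, ENNReal.ofReal (dist w (y l) ^ (-β))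
          ∂(Measure.pi fun _ : Fin n => ν)) ∂ν := by
        refine lintegral_prod _ ?_
        exact (Finset.measurable_prod Finset.univ (fun l _ => by fun_prop)).aemeasurable
    _ = ∫⁻ w, ∏ l : Fin n, (∫⁻ u, ENNReal.ofReal (dist w u ^ (-β)) ∂ν) ∂ν := by
        refine lintegral_congr fun w => ?_
        exact aux_fubini ν (fun _ u => ENNReal.ofReal (dist w u ^ (-β))) (fun _ => by fun_prop)
    _ ≤ ∫⁻ _, C ^ n ∂ν := by
        refine lintegral_mono fun w => ?_
        calc ∏ _l : Fin n, (∫⁻ u, ENNReal.ofReal (dist w u ^ (-β)) ∂ν)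
            ≤ ∏ _l : Fin n, C := Finset.prod_le_prod' fun l _ => hCb w
          _ = C ^ n := by rw [Finset.prod_const, Finset.card_univ, Fintype.card_fin]
    _ = C ^ n * ν Set.univ := lintegral_const _
    _ < ⊤ := ENNReal.mul_lt_top (ENNReal.pow_lt_top hC) (measure_lt_top _ _)

lemma aux_pointwise {k : ℕ} (hk1 : 1 ≤ k) {γ2 : ℝ} (hγ2 : 0 < γ2) (z : Fin k → ℂ) :
    ∏ p ∈ Finset.univ.filter (fun p : Fin k × Fin k => p.1 < p.2),
        ENNReal.ofReal (dist (z p.1) (z p.2) ^ (-γ2))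
    ≤ ∑ i : Fin k, ∏ j ∈ Finset.univ.erase i,
        ENNReal.ofReal (dist (z i) (z j) ^ (-(γ2 / 2 * k))) := by
  classical
  set b : Fin k → Fin k → ℝ≥0∞ :=
    fun i j => ENNReal.ofReal (dist (z i) (z j) ^ (-(γ2 / 2))) with hb
  have hsplit : ∀ i j : Fin k,
      ENNReal.ofReal (dist (z i) (z j) ^ (-γ2)) = b i j * b j i := by
    intro i j
    have hsymm : dist (z j) (z i) = dist (z i) (z j) := dist_comm _ _
    rcases eq_or_lt_of_le (dist_nonneg : (0:ℝ) ≤ dist (z i) (z j)) with h0 | hpos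
    · rw [hb]
      simp only [← h0, hsymm]
      rw [Real.zero_rpow (by linarith), Real.zero_rpow (by linarith)]
      simp
    · rw [hb]
      simp only [hsymm]
      rw [← ENNReal.ofReal_mul (Real.rpow_nonneg dist_nonneg _), ← Real.rpow_add hpos]
      congr 1
      ring
  have step2 : ∏ p ∈ Finset.univ.filter (fun p : Fin k × Fin k => p.1 < p.2),
      ENNReal.ofReal (dist (z p.1) (z p.2) ^ (-γ2))
      = (∏ p ∈ Finset.univ.filter (fun p : Fin k × Fin k => p.1 < p.2), b p.1 p.2)
        * ∏ p ∈ Finset.univ.filter (fun p : Fin k × Fin k => p.1 < p.2), b p.2 p.1 := by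
    rw [← Finset.prod_mul_distrib]
    exact Finset.prod_congr rfl fun p _ => hsplit p.1 p.2
  have step3 : (∏ p ∈ Finset.univ.filter (fun p : Fin k × Fin k => p.1 < p.2), b p.2 p.1)
      = ∏ p ∈ Finset.univ.filter (fun p : Fin k × Fin k => p.2 < p.1), b p.1 p.2 := by
    refine Finset.prod_nbij Prod.swap (fun p hp => ?_) (fun p _ q _ h => ?_) (fun p hp => ?_)
      (fun p _ => rfl)
    · simp only [Finset.mem_coe, Finset.mem_filter] at hp ⊢
      exact ⟨Finset.mem_univ _, hp.2⟩
    · exact Prod.swap_injective h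
    · simp only [Finset.coe_filter, Set.mem_setOf_eq] at hp ⊢
      exact ⟨p.swap, ⟨Finset.mem_univ _, hp.2⟩, Prod.swap_swap p⟩
  have step4 : (∏ p ∈ Finset.univ.filter (fun p : Fin k × Fin k => p.1 < p.2), b p.1 p.2)
      * (∏ p ∈ Finset.univ.filter (fun p : Fin k × Fin k => p.2 < p.1), b p.1 p.2)
      = ∏ p ∈ Finset.univ.filter (fun p : Fin k × Fin k => p.1 ≠ p.2), b p.1 p.2 := by
    rw [← Finset.prod_union]
    · congr 1
      ext p
      simp only [Finset.mem_union, Finset.mem_filter, Finset.mem_univ, true_and]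
      constructor
      · rintro (h | h)
        · exact ne_of_lt h
        · exact (ne_of_lt h).symm
      · intro h
        rcases lt_or_gt_of_ne h with h | h
        · exact Or.inl h
        · exact Or.inr h
    · rw [Finset.disjoint_left]
      intro p hp hp'
      simp only [Finset.mem_filter] at hp hp'
      exact absurd hp'.2 (not_lt.2 hp.2.le)
  have step5 : (∏ p ∈ Finset.univ.filter (fun p : Fin k × Fin k => p.1 ≠ p.2), b p.1 p.2)
      = ∏ i : Fin k, ∏ j ∈ Finset.univ.erase i, b i j := by
    rw [Finset.prod_filter, ← Finset.univ_product_univ,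
      Finset.prod_product' (f := fun i j : Fin k => if i ≠ j then b i j else 1)]
    refine Finset.prod_congr rfl fun i _ => ?_
    rw [← Finset.prod_filter]
    congr 1
    ext j
    simp [Finset.mem_erase, ne_comm]
  set G : Fin k → ℝ≥0∞ := fun i => ∏ j ∈ Finset.univ.erase i, b i j with hG
  have step7 : ∀ i, G i ^ k = ∏ j ∈ Finset.univ.erase i,
      ENNReal.ofReal (dist (z i) (z j) ^ (-(γ2 / 2 * k))) := by
    intro i
    rw [hG, ← Finset.prod_pow]
    refine Finset.prod_congr rfl fun j _ => ?_
    rw [hb, ← ENNReal.ofReal_pow (Real.rpow_nonneg dist_nonneg _)]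
    congr 1
    rw [← Real.rpow_natCast (dist (z i) (z j) ^ (-(γ2/2))) k, ← Real.rpow_mul dist_nonneg]
    congr 1
    ring
  obtain ⟨i₀, -, hmax⟩ := Finset.exists_max_image Finset.univ G
    ⟨⟨0, hk1⟩, Finset.mem_univ _⟩
  calc ∏ p ∈ Finset.univ.filter (fun p : Fin k × Fin k => p.1 < p.2),
        ENNReal.ofReal (dist (z p.1) (z p.2) ^ (-γ2))
      = ∏ i : Fin k, G i := by rw [step2, step3, step4, step5]
    _ ≤ ∏ _i : Fin k, G i₀ := Finset.prod_le_prod' fun i _ => hmax i (Finset.mem_univ i)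
    _ = G i₀ ^ k := by rw [Finset.prod_const, Finset.card_univ, Fintype.card_fin]
    _ ≤ ∑ i : Fin k, G i ^ k :=
        Finset.single_le_sum (f := fun i => G i ^ k) (fun _ _ => zero_le) (Finset.mem_univ i₀)
    _ = _ := Finset.sum_congr rfl fun i _ => step7 i


open MeasureTheory

/-- For `γ ∈ (0,2)` and `1 ≤ k < 4/γ²`, the integral
`u_k = ∫_{𝔻^k} ∏_{i<j} |z_i - z_j|^{-γ²} dz` over the `k`-fold product of the unit disk
is finite. -/
theorem stmt2 (γ : ℝ) (hγ : γ ∈ Set.Ioo (0:ℝ) 2) (k : ℕ) (hk1 : 1 ≤ k)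
    (hk : (k : ℝ) < 4 / γ ^ 2) :
    ∫⁻ z in {z : Fin k → ℂ | ∀ i, z i ∈ Metric.ball (0:ℂ) 1},
      ∏ p ∈ Finset.univ.filter (fun p : Fin k × Fin k => p.1 < p.2),
        ENNReal.ofReal (dist (z p.1) (z p.2) ^ (-(γ ^ 2))) < ⊤ := by
  have hγ0 : 0 < γ := hγ.1
  have hγ2 : 0 < γ ^ 2 := by positivity
  have hβ0 : 0 ≤ γ ^ 2 / 2 * k := by positivity
  have hβ2 : γ ^ 2 / 2 * k < 2 := by
    have h4 : (k : ℝ) * γ ^ 2 < 4 := (lt_div_iff₀ hγ2).1 hk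
    nlinarith
  obtain ⟨n, rfl⟩ : ∃ n, k = n + 1 := ⟨k - 1, by omega⟩
  rw [aux_restrict (n + 1)]
  calc ∫⁻ z : Fin (n+1) → ℂ,
        ∏ p ∈ Finset.univ.filter (fun p : Fin (n+1) × Fin (n+1) => p.1 < p.2),
          ENNReal.ofReal (dist (z p.1) (z p.2) ^ (-(γ ^ 2)))
        ∂(Measure.pi fun _ => (volume : Measure ℂ).restrict (Metric.ball (0:ℂ) 1))
      ≤ ∫⁻ z : Fin (n+1) → ℂ,
          ∑ i : Fin (n+1), ∏ j ∈ Finset.univ.erase i,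
            ENNReal.ofReal (dist (z i) (z j) ^ (-(γ ^ 2 / 2 * (n+1:ℕ))))
          ∂(Measure.pi fun _ => (volume : Measure ℂ).restrict (Metric.ball (0:ℂ) 1)) :=
        lintegral_mono fun z => aux_pointwise hk1 hγ2 z
    _ = ∑ i : Fin (n+1), ∫⁻ z : Fin (n+1) → ℂ,
          ∏ j ∈ Finset.univ.erase i,
            ENNReal.ofReal (dist (z i) (z j) ^ (-(γ ^ 2 / 2 * (n+1:ℕ))))
          ∂(Measure.pi fun _ => (volume : Measure ℂ).restrict (Metric.ball (0:ℂ) 1)) := by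
        refine lintegral_finset_sum _ fun i _ => ?_
        exact Finset.measurable_prod _ fun j _ => by fun_prop
    _ < ⊤ := by
        rw [ENNReal.sum_lt_top]
        intro i _
        exact aux_perI hβ0 hβ2 i
end
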